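/- Coercivity of the stent bilinear form: let δ, P̃, l > 0 and let w : [-l,0] → ℝ be continuously differentiable on [-l,0]. Then A[w,w] ≥ δ·min(1/(2l² + 1), P̃/(2l)) · ‖w‖_{H¹(-l,0)}², where A[w,v] := δ·∫_{-l}^0 w'(x)v'(x) dx + δ·P̃·w(0)v(0). -/

import Mathlib

open Set MeasureTheory intervalIntegral

/-- Cauchy–Schwarz with constant 1 on an interval. -/
lemma cs_interval (a b : ℝ) (hab : a ≤ b) (f : ℝ → ℝ)
    (hf : ContinuousOn f (Icc a b)) :
    (∫ t in a..b, f t) ^ 2 ≤ (b - a) * ∫ t in a..b, (f t) ^ 2 := by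
  have hu : uIcc a b = Icc a b := uIcc_of_le hab
  have hif : IntervalIntegrable f volume a b :=
    (hf.mono (by rw [hu])).intervalIntegrable
  have hif2 : IntervalIntegrable (fun t => (f t) ^ 2) volume a b :=
    ((hf.pow 2).mono (by rw [hu])).intervalIntegrable
  rcases eq_or_lt_of_le hab with h | h
  · subst h; simp
  · have hL : (0:ℝ) < b - a := by linarith
    set J : ℝ := ∫ t in a..b, f t with hJ
    set m : ℝ := J / (b - a) with hm
    have hnn : (0:ℝ) ≤ ∫ t in a..b, (f t - m) ^ 2 :=
      intervalIntegral.integral_nonneg hab (fun u _ => sq_nonneg _)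
    have hexp : (∫ t in a..b, (f t - m) ^ 2)
        = (∫ t in a..b, (f t) ^ 2) - 2 * m * J + m ^ 2 * (b - a) := by
      have : ∀ t, (f t - m) ^ 2 = (f t) ^ 2 - 2 * m * f t + m ^ 2 := by intro t; ring
      simp only [this]
      rw [intervalIntegral.integral_add (hif2.sub (hif.const_mul (2*m)))
            intervalIntegrable_const,
          intervalIntegral.integral_sub hif2 (hif.const_mul (2*m)),
          intervalIntegral.integral_const_mul, intervalIntegral.integral_const]
      simp only [smul_eq_mul, hm]
      field_simp
      rw [← hJ]; ring
    have hm2 : 2 * m * J = 2 * (J ^ 2 / (b - a)) := by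
      rw [hm]; field_simp
    have hm3 : m ^ 2 * (b - a) = J ^ 2 / (b - a) := by
      rw [hm]; field_simp
    rw [hexp, hm2, hm3] at hnn
    have hK : J ^ 2 / (b - a) ≤ ∫ t in a..b, (f t) ^ 2 := by linarith
    calc J ^ 2 = (J ^ 2 / (b - a)) * (b - a) := by field_simp
      _ ≤ (∫ t in a..b, (f t) ^ 2) * (b - a) := mul_le_mul_of_nonneg_right hK hL.le
      _ = (b - a) * ∫ t in a..b, (f t) ^ 2 := mul_comm _ _

/-- Coercivity of the stent bilinear form
`A[w,v] := δ·∫_{-l}^0 w'v' + δ·Pt·w(0)v(0)`: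
`A[w,w] ≥ δ·min(1/(2l² + 1), Pt/(2l)) · ‖w‖_{H¹(-l,0)}²`. -/
theorem stent_bilinear_form_coercive
    (δ Pt l : ℝ) (hδ : 0 < δ) (hP : 0 < Pt) (hl : 0 < l) (w w' : ℝ → ℝ)
    (hw : ∀ x ∈ Set.Icc (-l) 0, HasDerivWithinAt w (w' x) (Set.Icc (-l) 0) x)
    (hw' : ContinuousOn w' (Set.Icc (-l) 0)) :
    δ * (∫ x in (-l)..0, w' x * w' x) + δ * Pt * (w 0 * w 0) ≥
      δ * min (1 / (2 * l ^ 2 + 1)) (Pt / (2 * l)) *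
        (∫ x in (-l)..0, ((w x) ^ 2 + (w' x) ^ 2)) := by
  have hl0 : -l ≤ (0:ℝ) := by linarith
  have hcw : ContinuousOn w (Icc (-l) 0) := fun x hx => (hw x hx).continuousWithinAt
  -- integrability of w' and w'^2 on subintervals [x,0]
  have hsub : ∀ x ∈ Icc (-l) 0, Icc x 0 ⊆ Icc (-l) 0 := fun x hx =>
    Icc_subset_Icc hx.1 le_rfl
  have hint' : ∀ x ∈ Icc (-l) 0, IntervalIntegrable w' volume x 0 := fun x hx =>
    ((hw'.mono (hsub x hx)).mono (by rw [uIcc_of_le hx.2])).intervalIntegrable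
  have hintsq : IntervalIntegrable (fun t => (w' t) ^ 2) volume (-l) 0 :=
    ((hw'.pow 2).mono (by rw [uIcc_of_le hl0])).intervalIntegrable
  have hintw2 : IntervalIntegrable (fun t => (w t) ^ 2) volume (-l) 0 :=
    ((hcw.pow 2).mono (by rw [uIcc_of_le hl0])).intervalIntegrable
  set I1 : ℝ := ∫ x in (-l)..0, (w' x) ^ 2 with hI1def
  have hI1nn : 0 ≤ I1 :=
    intervalIntegral.integral_nonneg hl0 (fun u _ => sq_nonneg _)
  -- FTC on [x,0]
  have hftc : ∀ x ∈ Icc (-l) 0, w 0 - w x = ∫ t in x..0, w' t := by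
    intro x hx
    refine (intervalIntegral.integral_eq_sub_of_hasDeriv_right_of_le hx.2
      (hcw.mono (hsub x hx)) (fun t ht => ?_) (hint' x hx)).symm
    have ht' : t ∈ Ioo (-l) 0 := ⟨lt_of_le_of_lt hx.1 ht.1, ht.2⟩
    exact ((hw t (Ioo_subset_Icc_self ht')).hasDerivAt
      (Icc_mem_nhds ht'.1 ht'.2)).hasDerivWithinAt
  -- pointwise bound
  have hpt : ∀ x ∈ Icc (-l) 0, (w x) ^ 2 ≤ 2 * (w 0) ^ 2 + 2 * l * I1 := by
    intro x hx
    have hJ := hftc x hx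
    have hcs := cs_interval x 0 hx.2 w' (hw'.mono (hsub x hx))
    have hKnn : (0:ℝ) ≤ ∫ t in x..0, (w' t) ^ 2 :=
      intervalIntegral.integral_nonneg hx.2 (fun u _ => sq_nonneg _)
    have hKI1 : (∫ t in x..0, (w' t) ^ 2) ≤ I1 :=
      intervalIntegral.integral_mono_interval hx.1 hx.2 le_rfl
        (Filter.Eventually.of_forall (fun u => sq_nonneg _)) hintsq
    have hxl : 0 - x ≤ l := by have := hx.1; linarith
    have h1 : (∫ t in x..0, w' t) ^ 2 ≤ l * I1 := by
      calc (∫ t in x..0, w' t) ^ 2 ≤ (0 - x) * ∫ t in x..0, (w' t) ^ 2 := hcs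
        _ ≤ l * I1 := by nlinarith [hx.1]
    have : w x = w 0 - ∫ t in x..0, w' t := by linarith [hJ]
    rw [this]
    nlinarith [sq_nonneg (w 0 + ∫ t in x..0, w' t)]
  -- integrate the pointwise bound
  have hW2 : (∫ x in (-l)..0, (w x) ^ 2) ≤ l * (2 * (w 0) ^ 2 + 2 * l * I1) := by
    have h2 := intervalIntegral.integral_mono_on hl0 hintw2 intervalIntegrable_const hpt
    have h3 : (∫ _x in (-l)..0, (2 * (w 0) ^ 2 + 2 * l * I1 : ℝ))
        = l * (2 * (w 0) ^ 2 + 2 * l * I1) := by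
      rw [intervalIntegral.integral_const, smul_eq_mul]; ring
    linarith [h2, h3.le, h3.ge]
  -- split RHS integral
  have hsplit : (∫ x in (-l)..0, ((w x) ^ 2 + (w' x) ^ 2))
      = (∫ x in (-l)..0, (w x) ^ 2) + I1 :=
    intervalIntegral.integral_add hintw2 hintsq
  have hI1' : (∫ x in (-l)..0, w' x * w' x) = I1 := by
    rw [hI1def]; congr 1; ext t; ring
  rw [hI1', hsplit]
  set c : ℝ := min (1 / (2 * l ^ 2 + 1)) (Pt / (2 * l)) with hc
  have hc0 : 0 ≤ c := le_min (by positivity) (by positivity)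
  have hc1 : c * (2 * l ^ 2 + 1) ≤ 1 := by
    have := min_le_left (1 / (2 * l ^ 2 + 1)) (Pt / (2 * l))
    rw [← hc] at this
    calc c * (2 * l ^ 2 + 1) ≤ (1 / (2 * l ^ 2 + 1)) * (2 * l ^ 2 + 1) := by
          exact mul_le_mul_of_nonneg_right this (by positivity)
      _ = 1 := by field_simp
  have hc2 : c * (2 * l) ≤ Pt := by
    have := min_le_right (1 / (2 * l ^ 2 + 1)) (Pt / (2 * l))
    rw [← hc] at this
    calc c * (2 * l) ≤ (Pt / (2 * l)) * (2 * l) := by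
          exact mul_le_mul_of_nonneg_right this (by positivity)
      _ = Pt := by field_simp
  set W2 : ℝ := ∫ x in (-l)..0, (w x) ^ 2 with hW2def
  have hW2nn : 0 ≤ W2 :=
    intervalIntegral.integral_nonneg hl0 (fun u _ => sq_nonneg _)
  have key : c * (W2 + I1) ≤ I1 + Pt * (w 0 * w 0) := by
    have h3 : c * (W2 + I1) ≤ c * (2 * l * (w 0) ^ 2 + (2 * l ^ 2 + 1) * I1) := by
      apply mul_le_mul_of_nonneg_left _ hc0
      nlinarith [hW2]
    nlinarith [mul_le_mul_of_nonneg_right hc1 hI1nn,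
      mul_le_mul_of_nonneg_right hc2 (sq_nonneg (w 0))]
  have := mul_le_mul_of_nonneg_left key (le_of_lt hδ)
  nlinarith [this]
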